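/- Let J be a nontrivial real interval containing 0 and let I = J + J = {x + y : x, y ∈ J}. If f : I → ℝ satisfies f(x+x') = f(x) + f(x') for all x, x' ∈ J, then f extends uniquely to an additive function g : ℝ → ℝ (i.e., g(x+y) = g(x)+g(y) for all x, y ∈ ℝ and g restricted to I equals f). -/

import Mathlib

/-- An additive function vanishing on `[0, δ]` with `δ > 0` vanishes everywhere. -/
private lemma cauchy_zero_ext (h : ℝ → ℝ) (hadd : ∀ x y : ℝ, h (x + y) = h x + h y)
    (δ : ℝ) (hδ : 0 < δ) (hz : ∀ x : ℝ, 0 ≤ x → x ≤ δ → h x = 0) : ∀ x, h x = 0 := by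
  have h0 : h 0 = 0 := by have := hadd 0 0; simp at this; linarith
  have hneg : ∀ x, h (-x) = - h x := by
    intro x
    have := hadd x (-x)
    simp at this
    linarith [h0]
  have hnat : ∀ n : ℕ, ∀ t : ℝ, h ((n : ℝ) * t) = n * h t := by
    intro n
    induction n with
    | zero => intro t; simp [h0]
    | succ n ih =>
      intro t
      have : ((n : ℝ) + 1) * t = (n : ℝ) * t + t := by ring
      push_cast
      rw [this, hadd, ih]
      ring
  have key : ∀ x : ℝ, 0 ≤ x → h x = 0 := by
    intro x hx
    set n : ℕ := ⌈x / δ⌉₊ + 1 with hn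
    have hn0 : (0 : ℝ) < n := by positivity
    have h1 : x / δ ≤ (n : ℝ) := by
      have := Nat.le_ceil (x / δ)
      have : ((⌈x / δ⌉₊ : ℝ)) ≤ n := by push_cast [hn]; linarith
      linarith [Nat.le_ceil (x / δ)]
    have h2 : x / (n : ℝ) ≤ δ := by
      rw [div_le_iff₀ hδ] at h1
      rw [div_le_iff₀ hn0]
      nlinarith
    have h3 : x = (n : ℝ) * (x / n) := by field_simp
    rw [h3, hnat]
    rw [hz (x / n) (by positivity) h2]
    ring
  intro x
  rcases le_or_gt 0 x with hx | hx
  · exact key x hx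
  · have := key (-x) (by linarith)
    rw [hneg] at this
    linarith

/-- Natural-number homogeneity from the Cauchy equation on a set containing the whole segment. -/
private lemma cauchy_nat_homog (J : Set ℝ) (h0 : (0 : ℝ) ∈ J)
    (f : ℝ → ℝ) (hadd : ∀ x ∈ J, ∀ y ∈ J, f (x + y) = f x + f y) :
    ∀ n : ℕ, ∀ t : ℝ, (∀ k : ℕ, k ≤ n → (k : ℝ) * t ∈ J) → f ((n : ℝ) * t) = n * f t := by
  have hf0 : f 0 = 0 := by have := hadd 0 h0 0 h0; simp at this; linarith
  intro n
  induction n with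
  | zero => intro t _; simp [hf0]
  | succ n ih =>
    intro t ht
    have htJ : t ∈ J := by have := ht 1 (by omega); simpa using this
    have hntJ : (n : ℝ) * t ∈ J := ht n (by omega)
    have e : ((n : ℝ) + 1) * t = (n : ℝ) * t + t := by ring
    push_cast
    rw [e, hadd _ hntJ _ htJ, ih t (fun k hk => ht k (by omega))]
    ring

/-- Existence of an additive extension when `J` contains `[0, δ]`, `δ > 0`. -/
private lemma cauchy_aux_exists (J : Set ℝ) (hJ : J.OrdConnected) (h0 : (0 : ℝ) ∈ J)
    (δ : ℝ) (hδ : 0 < δ) (hδJ : δ ∈ J)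
    (f : ℝ → ℝ) (hadd : ∀ x ∈ J, ∀ y ∈ J, f (x + y) = f x + f y) :
    ∃ g : ℝ → ℝ, (∀ x y : ℝ, g (x + y) = g x + g y) ∧ ∀ x ∈ J, g x = f x := by
  have hsub : Set.Icc (0 : ℝ) δ ⊆ J := hJ.out h0 hδJ
  have memJ : ∀ t : ℝ, 0 ≤ t → t ≤ δ → t ∈ J := fun t h1 h2 => hsub ⟨h1, h2⟩
  have homog := cauchy_nat_homog J h0 f hadd
  have hf0 : f 0 = 0 := by have := hadd 0 h0 0 h0; simp at this; linarith
  set N : ℝ → ℕ := fun x => ⌈x / δ⌉₊ + 1 with hN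
  have hNpos : ∀ x, (0 : ℝ) < N x := by intro x; simp [hN]; positivity
  have hNle : ∀ x : ℝ, 0 ≤ x → x / (N x : ℝ) ≤ δ := by
    intro x hx
    have h1 : x / δ ≤ (N x : ℝ) := by
      have h2 := Nat.le_ceil (x / δ)
      have h3 : ((⌈x / δ⌉₊ : ℝ)) + 1 = (N x : ℝ) := by simp [hN]
      linarith
    rw [div_le_iff₀ hδ] at h1
    rw [div_le_iff₀ (hNpos x)]
    nlinarith
  set g0 : ℝ → ℝ := fun x => (N x : ℝ) * f (x / N x) with hg0
  -- key rescaling lemma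
  have lemB' : ∀ n m : ℕ, 0 < n → 0 < m → ∀ x : ℝ, 0 ≤ x → x / n ≤ δ →
      f (x / n) = (m : ℝ) * f (x / ((n : ℝ) * m)) := by
    intro n m hn hm x hx hxn
    have hn0 : (0 : ℝ) < n := by exact_mod_cast hn
    have hm0 : (0 : ℝ) < m := by exact_mod_cast hm
    set t : ℝ := x / ((n : ℝ) * m) with htdef
    have ht : (m : ℝ) * t = x / n := by rw [htdef]; field_simp
    have := homog m t (by
      intro k hk
      have hk0 : (0 : ℝ) ≤ k := by positivity
      have hkm : (k : ℝ) ≤ m := by exact_mod_cast hk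
      have ht0 : 0 ≤ t := by positivity
      apply memJ
      · positivity
      · calc (k : ℝ) * t ≤ (m : ℝ) * t := by nlinarith
          _ = x / n := ht
          _ ≤ δ := hxn)
    rw [ht] at this
    exact this
  -- value of g0 via any valid denominator
  have lemB : ∀ x : ℝ, 0 ≤ x → ∀ n : ℕ, 0 < n → x / n ≤ δ → g0 x = (n : ℝ) * f (x / n) := by
    intro x hx n hn hxn
    have e1 := lemB' (N x) n (by positivity) hn x hx (hNle x hx)
    have e2 := lemB' n (N x) hn (by positivity) x hx hxn
    rw [hg0]
    simp only
    rw [e1, e2, mul_comm ((n : ℝ)) ((N x : ℝ))]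
    ring
  -- additivity on nonnegatives
  have gadd0 : ∀ x y : ℝ, 0 ≤ x → 0 ≤ y → g0 (x + y) = g0 x + g0 y := by
    intro x y hx hy
    set n : ℕ := N (x + y) with hn
    have hn0 : 0 < n := by simp [hn, hN]
    have hn0' : (0 : ℝ) < n := by exact_mod_cast hn0
    have hxy : (x + y) / n ≤ δ := hNle (x + y) (by linarith)
    have hxn : x / n ≤ δ := le_trans (by gcongr; linarith) hxy
    have hyn : y / n ≤ δ := le_trans (by gcongr; linarith) hxy
    have hxm : x / n ∈ J := memJ _ (by positivity) hxn
    have hym : y / n ∈ J := memJ _ (by positivity) hyn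
    rw [lemB (x + y) (by linarith) n hn0 hxy, lemB x hx n hn0 hxn, lemB y hy n hn0 hyn]
    rw [add_div, hadd _ hxm _ hym]
    ring
  -- g0 agrees with f on nonnegative points of J
  have gval : ∀ x ∈ J, 0 ≤ x → g0 x = f x := by
    intro x hxJ hx
    set n : ℕ := N x with hn
    have hn0 : 0 < n := by simp [hn, hN]
    have hn0' : (0 : ℝ) < n := by exact_mod_cast hn0
    have hxn : x / n ≤ δ := hNle x hx
    have hsub2 : Set.Icc (0 : ℝ) x ⊆ J := hJ.out h0 hxJ
    have hfx : f x = (n : ℝ) * f (x / n) := by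
      have e : x = (n : ℝ) * (x / n) := by field_simp
      nth_rewrite 1 [e]
      apply homog
      intro k hk
      have hkm : (k : ℝ) ≤ n := by exact_mod_cast hk
      apply hsub2
      constructor
      · positivity
      · calc (k : ℝ) * (x / n) ≤ (n : ℝ) * (x / n) := by
              have : 0 ≤ x / n := by positivity
              nlinarith
          _ = x := e.symm
    rw [lemB x hx n hn0 hxn, hfx]
  -- g0 at -x for nonpositive x in J
  have gvalneg : ∀ x ∈ J, x ≤ 0 → g0 (-x) = - f x := by
    intro x hxJ hx
    set n : ℕ := N (-x) with hn
    have hn0 : 0 < n := by simp [hn, hN]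
    have hn0' : (0 : ℝ) < n := by exact_mod_cast hn0
    have hxn : (-x) / n ≤ δ := hNle (-x) (by linarith)
    have hsub2 : Set.Icc x (0 : ℝ) ⊆ J := hJ.out hxJ h0
    have hxnJ : x / n ∈ J := by
      apply hsub2
      constructor
      · rw [le_div_iff₀ hn0']
        have h1n : (1 : ℝ) ≤ n := by exact_mod_cast hn0
        nlinarith
      · apply div_nonpos_of_nonpos_of_nonneg hx (le_of_lt hn0')
    have hxnJ' : (-x) / n ∈ J := memJ _ (div_nonneg (by linarith) (le_of_lt hn0')) hxn
    have hfneg : f ((-x) / n) = - f (x / n) := by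
      have := hadd (x / n) hxnJ ((-x) / n) hxnJ'
      have e : x / n + (-x) / n = 0 := by ring
      rw [e, hf0] at this
      linarith
    have hfx : f x = (n : ℝ) * f (x / n) := by
      have e : x = (n : ℝ) * (x / n) := by field_simp
      nth_rewrite 1 [e]
      apply homog
      intro k hk
      have hkm : (k : ℝ) ≤ n := by exact_mod_cast hk
      have hk0 : (0 : ℝ) ≤ k := by positivity
      apply hsub2
      constructor
      · have hxn0 : x / n ≤ 0 := div_nonpos_of_nonpos_of_nonneg hx (le_of_lt hn0')
        calc x = (n : ℝ) * (x / n) := e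
          _ ≤ (k : ℝ) * (x / n) := by nlinarith
      · have hxn0 : x / n ≤ 0 := div_nonpos_of_nonpos_of_nonneg hx (le_of_lt hn0')
        nlinarith
    rw [lemB (-x) (by linarith) n hn0 hxn, hfneg, hfx]
    ring
  -- define the full extension
  refine ⟨fun x => if 0 ≤ x then g0 x else - g0 (-x), ?_, ?_⟩
  · intro x y
    simp only
    split_ifs with h1 h2 h3 h3 h2 h3 h3
    · exact gadd0 x y h2 h3
    · have := gadd0 (x + y) (-y) h1 (by linarith)
      rw [show x + y + -y = x by ring] at this
      linarith
    · have := gadd0 (x + y) (-x) h1 (by linarith)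
      rw [show x + y + -x = y by ring] at this
      linarith
    · push_neg at h2 h3; linarith
    · push_neg at h1; linarith
    · have := gadd0 x (-(x + y)) h2 (by push_neg at h1; linarith)
      rw [show x + -(x + y) = -y by ring] at this
      linarith
    · have := gadd0 y (-(x + y)) h3 (by push_neg at h1; linarith)
      rw [show y + -(x + y) = -x by ring] at this
      linarith
    · have := gadd0 (-x) (-y) (by push_neg at h2; linarith) (by push_neg at h3; linarith)
      rw [show -x + -y = -(x + y) by ring] at this
      linarith
  · intro x hx
    simp only
    split_ifs with h
    · exact gval x hx h
    · push_neg at h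
      have := gvalneg x hx h.le
      linarith

/-- If `f` satisfies the Cauchy equation for arguments in a
nontrivial interval `J` containing `0`, then `f` extends uniquely from
`I = J + J` to an additive function on `ℝ`. -/
theorem cauchy_unique_additive_extension (J : Set ℝ) (hJ : J.OrdConnected)
    (h0 : (0 : ℝ) ∈ J) (hnt : ∃ a ∈ J, ∃ b ∈ J, a < b)
    (I : Set ℝ) (hIdef : I = {z : ℝ | ∃ x ∈ J, ∃ y ∈ J, z = x + y})
    (f : ℝ → ℝ) (hadd : ∀ x ∈ J, ∀ y ∈ J, f (x + y) = f x + f y) :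
    ∃! g : ℝ → ℝ, (∀ x y : ℝ, g (x + y) = g x + g y) ∧ ∀ z ∈ I, g z = f z := by
  obtain ⟨a, haJ, b, hbJ, hab⟩ := hnt
  have hJI : J ⊆ I := by
    intro x hx
    rw [hIdef]
    exact ⟨x, hx, 0, h0, by ring⟩
  -- from an additive g agreeing with f on J, get agreement on I
  have agree : ∀ g : ℝ → ℝ, (∀ x y : ℝ, g (x + y) = g x + g y) →
      (∀ x ∈ J, g x = f x) → ∀ z ∈ I, g z = f z := by
    intro g hg hgJ z hz
    rw [hIdef] at hz
    obtain ⟨x, hx, y, hy, rfl⟩ := hz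
    rw [hg, hgJ x hx, hgJ y hy, hadd x hx y hy]
  by_cases hb : 0 < b
  · obtain ⟨g, hg1, hg2⟩ := cauchy_aux_exists J hJ h0 b hb hbJ f hadd
    refine ⟨g, ⟨hg1, agree g hg1 hg2⟩, ?_⟩
    rintro g₂ ⟨hg₂1, hg₂2⟩
    funext x
    have hzero : ∀ x, g₂ x - g x = 0 := by
      apply cauchy_zero_ext (fun x => g₂ x - g x) (by intro x y; simp [hg1, hg₂1]; ring) b hb
      intro x hx1 hx2
      have hxJ : x ∈ J := hJ.out h0 hbJ ⟨hx1, hx2⟩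
      have hxI : x ∈ I := hJI hxJ
      simp [hg₂2 x hxI, agree g hg1 hg2 x hxI]
    have := hzero x
    linarith
  · push_neg at hb
    have ha : a < 0 := lt_of_lt_of_le hab hb
    set J' : Set ℝ := {x : ℝ | -x ∈ J} with hJ'def
    have hJ' : J'.OrdConnected := by
      constructor
      intro x hx y hy z hz
      exact hJ.out hy hx ⟨neg_le_neg hz.2, neg_le_neg hz.1⟩
    have h0' : (0 : ℝ) ∈ J' := by simp [hJ'def, h0]
    have haJ' : -a ∈ J' := by simp [hJ'def, haJ]
    have hadd' : ∀ x ∈ J', ∀ y ∈ J', (fun x => f (-x)) (x + y) = (fun x => f (-x)) x + (fun x => f (-x)) y := by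
      intro x hx y hy
      simp only
      rw [show -(x + y) = -x + -y by ring]
      exact hadd (-x) hx (-y) hy
    obtain ⟨g', hg'1, hg'2⟩ := cauchy_aux_exists J' hJ' h0' (-a) (by linarith) haJ'
      (fun x => f (-x)) hadd'
    set g : ℝ → ℝ := fun x => g' (-x) with hgdef
    have hg1 : ∀ x y : ℝ, g (x + y) = g x + g y := by
      intro x y
      simp only [hgdef]
      rw [show -(x + y) = -x + -y by ring]
      exact hg'1 (-x) (-y)
    have hg2 : ∀ x ∈ J, g x = f x := by
      intro x hx
      have hxJ' : -x ∈ J' := by simp [hJ'def, hx]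
      have := hg'2 (-x) hxJ'
      simpa [hgdef] using this
    refine ⟨g, ⟨hg1, agree g hg1 hg2⟩, ?_⟩
    rintro g₂ ⟨hg₂1, hg₂2⟩
    funext x
    have hzero : ∀ x, g₂ (-x) - g (-x) = 0 := by
      apply cauchy_zero_ext (fun x => g₂ (-x) - g (-x)) ?_ (-a) (by linarith)
      · intro x hx1 hx2
        have hxJ : -x ∈ J := hJ.out haJ h0 ⟨by linarith, by linarith⟩
        have hxI : -x ∈ I := hJI hxJ
        simp [hg₂2 (-x) hxI, agree g hg1 hg2 (-x) hxI]
      · intro x y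
        rw [show -(x + y) = -x + -y by ring, hg₂1, hg1]
        ring
    have := hzero (-x)
    simp at this
    linarith
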